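/- Let n ≥ 1 and let f : {0,1,…,n} → ℝ satisfy f(k) ≥ 0 for all k, Σ_{k=0}^{n} C(n,k) f(k) = 1, and Σ_{k=1}^{n} C(n−1,k−1) f(k) = 1. Then f(n) = 1 and f(k) = 0 for all 0 ≤ k ≤ n−1. -/

import Mathlib

/-- If `n ≥ 1` and `f : {0,…,n} → ℝ` satisfies `f(k) ≥ 0` for all `k`,
`∑_{k=0}^{n} C(n,k) f(k) = 1` and `∑_{k=1}^{n} C(n−1,k−1) f(k) = 1`, then `f(n) = 1`
and `f(k) = 0` for all `0 ≤ k ≤ n−1`. -/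
theorem statement10 (n : ℕ) (hn : 1 ≤ n) (f : ℕ → ℝ) (hpos : ∀ k ≤ n, 0 ≤ f k)
    (h1 : ∑ k ∈ Finset.range (n + 1), (n.choose k : ℝ) * f k = 1)
    (h2 : ∑ k ∈ Finset.Icc 1 n, ((n - 1).choose (k - 1) : ℝ) * f k = 1) :
    f n = 1 ∧ ∀ k < n, f k = 0 := by
  obtain ⟨m, rfl⟩ : ∃ m, n = m + 1 := ⟨n - 1, (Nat.succ_pred_eq_of_pos hn).symm⟩
  have h1o := h1
  rw [← Finset.Ico_add_one_right_eq_Icc, Finset.sum_Ico_eq_sum_range] at h2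
  simp only [Nat.succ_sub_one, Nat.add_sub_cancel, Nat.add_sub_cancel_left, add_comm 1] at h2
  -- h2 : ∑ i in range (m+1), (m.choose i) * f (i+1) = 1
  rw [Finset.sum_range_succ'] at h1
  have pascal : ∀ i : ℕ, (((m+1).choose (i+1) : ℝ)) = m.choose i + m.choose (i+1) := by
    intro i
    exact_mod_cast Nat.choose_succ_succ m i
  have h1' : ∑ i ∈ Finset.range (m+1),
      ((m.choose i : ℝ) * f (i+1) + (m.choose (i+1) : ℝ) * f (i+1)) + f 0 = 1 := by
    simpa [pascal, add_mul] using h1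
  rw [Finset.sum_add_distrib] at h1'
  have key : ∑ i ∈ Finset.range (m+1), (m.choose (i+1) : ℝ) * f (i+1) + f 0 = 0 := by
    linarith
  have hterm : ∀ i ∈ Finset.range (m+1), 0 ≤ (m.choose (i+1) : ℝ) * f (i+1) := by
    intro i hi
    exact mul_nonneg (by positivity) (hpos _ (by have := Finset.mem_range.mp hi; omega))
  have hf0 : 0 ≤ f 0 := hpos 0 (by omega)
  have hsum0 : ∑ i ∈ Finset.range (m+1), (m.choose (i+1) : ℝ) * f (i+1) = 0 := by
    have := Finset.sum_nonneg hterm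
    linarith
  have hzero : ∀ i ∈ Finset.range (m+1), (m.choose (i+1) : ℝ) * f (i+1) = 0 :=
    (Finset.sum_eq_zero_iff_of_nonneg hterm).mp hsum0
  have hfk : ∀ k < m + 1, f k = 0 := by
    intro k hk
    rcases Nat.eq_zero_or_pos k with rfl | hkpos
    · linarith [Finset.sum_nonneg hterm]
    · obtain ⟨j, rfl⟩ : ∃ j, k = j + 1 := ⟨k - 1, (Nat.succ_pred_eq_of_pos hkpos).symm⟩
      have hj : j ∈ Finset.range (m+1) := Finset.mem_range.mpr (by omega)
      have hc : 0 < m.choose (j+1) := Nat.choose_pos (by omega)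
      have := hzero j hj
      have hcR : (0:ℝ) < (m.choose (j+1) : ℝ) := by exact_mod_cast hc
      have := mul_eq_zero.mp this
      rcases this with h | h
      · exact absurd h (ne_of_gt hcR)
      · exact h
  refine ⟨?_, hfk⟩
  rw [Finset.sum_range_succ] at h1o
  have : ∑ k ∈ Finset.range (m+1), ((m+1).choose k : ℝ) * f k = 0 :=
    Finset.sum_eq_zero fun k hk => by
      rw [hfk k (Finset.mem_range.mp hk), mul_zero]
  simpa [this] using h1o
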